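/- Let a, b, C₀ be real numbers with 1 < a ≤ b and C₀ > 0, and let (h_k)_{k≥0} be a sequence of nonnegative real numbers satisfying h₀^{a−1} ≤ C₀ and the recurrence inequality h_{k+1} ≤ h_k − h_k^a/(b·C₀) for all k ≥ 0. Then for all k ≥ 0, h_k ≤ (C₀ / (((a−1)/b)·k + 1))^{1/(a−1)}. Moreover, whenever h_k > 0 one has h_{k+1} < h_k. -/

import Mathlib

/-- Recurrence-inequality solution lemma (Lemma C.4): a nonnegative sequence with
`h₀^(a-1) ≤ C₀` and `h_{k+1} ≤ h_k - h_k^a/(b C₀)` satisfies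
`h_k ≤ (C₀ / ((a-1)/b · k + 1))^(1/(a-1))`, and is strictly decreasing while positive. -/
theorem recurrence_inequality_solution
    (a b C₀ : ℝ) (ha : 1 < a) (hab : a ≤ b) (hC₀ : 0 < C₀)
    (h : ℕ → ℝ) (hnonneg : ∀ k, 0 ≤ h k)
    (hinit : h 0 ^ (a - 1) ≤ C₀)
    (hrec : ∀ k : ℕ, h (k + 1) ≤ h k - h k ^ a / (b * C₀)) :
    (∀ k : ℕ, h k ≤ (C₀ / ((a - 1) / b * k + 1)) ^ (1 / (a - 1))) ∧
      (∀ k : ℕ, 0 < h k → h (k + 1) < h k) := by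
  have hα0 : 0 < a - 1 := by linarith
  have hαne : a - 1 ≠ 0 := ne_of_gt hα0
  have hb : 1 < b := lt_of_lt_of_le ha hab
  have hb0 : 0 < b := by linarith
  have hbC : 0 < b * C₀ := by positivity
  -- derivative of f x = x - x^a/(b*C₀)
  have hderiv : ∀ x : ℝ, HasDerivAt (fun x : ℝ => x - x ^ a / (b * C₀))
      (1 - a * x ^ (a - 1) / (b * C₀)) x := by
    intro x
    exact (hasDerivAt_id x).sub
      ((Real.hasDerivAt_rpow_const (Or.inr ha.le)).div_const (b * C₀))
  -- monotonicity of f on [0, y] when y^(a-1) ≤ C₀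
  have mono : ∀ x y : ℝ, 0 ≤ x → x ≤ y → y ^ (a - 1) ≤ C₀ →
      x - x ^ a / (b * C₀) ≤ y - y ^ a / (b * C₀) := by
    intro x y hx hxy hyC
    have hmain : MonotoneOn (fun x : ℝ => x - x ^ a / (b * C₀)) (Set.Icc 0 y) := by
      apply monotoneOn_of_deriv_nonneg (convex_Icc 0 y)
      · exact Continuous.continuousOn
          (continuous_id.sub ((Real.continuous_rpow_const (by linarith)).div_const _))
      · intro z hz
        exact (hderiv z).differentiableAt.differentiableWithinAt
      · intro z hz
        rw [interior_Icc] at hz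
        rw [(hderiv z).deriv]
        have hz0 : 0 ≤ z := le_of_lt hz.1
        have h1 : z ^ (a - 1) ≤ y ^ (a - 1) :=
          Real.rpow_le_rpow hz0 hz.2.le hα0.le
        have h2 : a * z ^ (a - 1) ≤ b * C₀ := by
          calc a * z ^ (a - 1) ≤ a * C₀ := by nlinarith
            _ ≤ b * C₀ := by nlinarith
        have : a * z ^ (a - 1) / (b * C₀) ≤ 1 := by
          rw [div_le_one hbC]; exact h2
        linarith
    exact hmain ⟨hx, hxy⟩ ⟨hx.trans hxy, le_rfl⟩ hxy
  -- bernoulli core: (1-x)^(a-1) * (1+(a-1)x) ≤ 1 for 0 ≤ x ≤ 1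
  have core : ∀ x : ℝ, 0 ≤ x → x ≤ 1 →
      (1 - x) ^ (a - 1) * (1 + (a - 1) * x) ≤ 1 := by
    intro x hx hx1
    rcases le_total (a - 1) 1 with hle | hge
    · have hber : (1 - x) ^ (a - 1) ≤ 1 + (a - 1) * (-x) := by
        have := rpow_one_add_le_one_add_mul_self (s := -x) (by linarith)
          (p := a - 1) hα0.le hle
        simpa [sub_eq_add_neg] using this
      have h1 : 0 ≤ 1 + (a - 1) * x := by nlinarith
      nlinarith [sq_nonneg ((a - 1) * x)]
    · have hber : 1 + (a - 1) * x ≤ (1 + x) ^ (a - 1) :=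
        one_add_mul_self_le_rpow_one_add (by linarith) hge
      have h1 : (1 - x) ^ (a - 1) * (1 + x) ^ (a - 1) = ((1 - x) * (1 + x)) ^ (a - 1) :=
        (Real.mul_rpow (by linarith) (by linarith)).symm
      have h2 : ((1 - x) * (1 + x)) ^ (a - 1) ≤ 1 :=
        Real.rpow_le_one (by nlinarith) (by nlinarith) hα0.le
      have h3 : 0 ≤ (1 - x) ^ (a - 1) := Real.rpow_nonneg (by linarith) _
      calc (1 - x) ^ (a - 1) * (1 + (a - 1) * x)
          ≤ (1 - x) ^ (a - 1) * (1 + x) ^ (a - 1) :=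
            mul_le_mul_of_nonneg_left hber h3
        _ = ((1 - x) * (1 + x)) ^ (a - 1) := h1
        _ ≤ 1 := h2
  -- key step inequality
  have key : ∀ s : ℝ, 1 ≤ s →
      (C₀ / s) ^ (1 / (a - 1)) - ((C₀ / s) ^ (1 / (a - 1))) ^ a / (b * C₀)
        ≤ (C₀ / (s + (a - 1) / b)) ^ (1 / (a - 1)) := by
    intro s hs
    have hs0 : 0 < s := by linarith
    set x : ℝ := 1 / (b * s) with hxdef
    have hx0 : 0 < x := by positivity
    have hx1 : x ≤ 1 := by
      rw [hxdef, div_le_one (by positivity)]; nlinarith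
    have hCs : 0 < C₀ / s := by positivity
    set u : ℝ := (C₀ / s) ^ (1 / (a - 1)) with hudef
    have hu0 : 0 < u := Real.rpow_pos_of_pos hCs _
    -- u^a = (C₀/s) * u
    have hua : u ^ a = (C₀ / s) * u := by
      rw [hudef, ← Real.rpow_mul hCs.le,
        show 1 / (a - 1) * a = 1 + 1 / (a - 1) by field_simp; ring,
        Real.rpow_add hCs, Real.rpow_one]
    have hLHS : u - u ^ a / (b * C₀) = u * (1 - x) := by
      rw [hua, hxdef]; field_simp
    have hst0 : 0 < s + (a - 1) / b := by positivity
    have hratio : C₀ / (s + (a - 1) / b) = (C₀ / s) * (s / (s + (a - 1) / b)) := by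
      field_simp
    have hRHS : (C₀ / (s + (a - 1) / b)) ^ (1 / (a - 1))
        = u * (s / (s + (a - 1) / b)) ^ (1 / (a - 1)) := by
      rw [hratio, Real.mul_rpow hCs.le (by positivity), hudef]
    -- core comparison
    have hfrac : s / (s + (a - 1) / b) = 1 / (1 + (a - 1) * x) := by
      rw [hxdef]; field_simp
    have hpos : 0 < 1 + (a - 1) * x := by positivity
    have hcore := core x hx0.le hx1
    have h4 : (1 - x) ^ (a - 1) ≤ s / (s + (a - 1) / b) := by
      rw [hfrac, le_div_iff₀ hpos]; exact hcore
    have h5 : 1 - x ≤ (s / (s + (a - 1) / b)) ^ (1 / (a - 1)) := by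
      have := Real.rpow_le_rpow (Real.rpow_nonneg (by linarith : (0:ℝ) ≤ 1 - x) _)
        h4 (le_of_lt (by positivity : (0:ℝ) < 1 / (a - 1)))
      rwa [one_div, Real.rpow_rpow_inv (by linarith) hαne, ← one_div] at this
    rw [hLHS, hRHS]
    exact mul_le_mul_of_nonneg_left h5 hu0.le
  -- main bound by induction
  have hS : ∀ k : ℕ, 1 ≤ (a - 1) / b * k + 1 := by
    intro k
    have : 0 ≤ (a - 1) / b * k := by positivity
    linarith
  have bound : ∀ k : ℕ, h k ≤ (C₀ / ((a - 1) / b * k + 1)) ^ (1 / (a - 1)) := by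
    intro k
    induction k with
    | zero =>
      have h0 : h 0 = (h 0 ^ (a - 1)) ^ (1 / (a - 1)) := by
        rw [one_div, Real.rpow_rpow_inv (hnonneg 0) hαne]
      rw [h0]
      simp only [Nat.cast_zero, mul_zero, zero_add, div_one]
      exact Real.rpow_le_rpow (Real.rpow_nonneg (hnonneg 0) _) hinit (by positivity)
    | succ k ih =>
      set s : ℝ := (a - 1) / b * k + 1 with hsdef
      have hs1 : 1 ≤ s := hS k
      have hs0 : 0 < s := by linarith
      have hgα : ((C₀ / s) ^ (1 / (a - 1))) ^ (a - 1) ≤ C₀ := by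
        rw [one_div, Real.rpow_inv_rpow (by positivity) hαne]
        exact div_le_self hC₀.le hs1
      have step1 : h (k + 1) ≤ h k - h k ^ a / (b * C₀) := hrec k
      have step2 : h k - h k ^ a / (b * C₀)
          ≤ (C₀ / s) ^ (1 / (a - 1)) - ((C₀ / s) ^ (1 / (a - 1))) ^ a / (b * C₀) :=
        mono (h k) _ (hnonneg k) ih hgα
      have step3 := key s hs1
      have hcast : (a - 1) / b * (k + 1 : ℕ) + 1 = s + (a - 1) / b := by
        rw [hsdef]; push_cast; ring
      rw [hcast]
      exact le_trans step1 (le_trans step2 step3)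
  refine ⟨bound, fun k hk => ?_⟩
  have : 0 < h k ^ a / (b * C₀) := by
    exact div_pos (Real.rpow_pos_of_pos hk a) hbC
  linarith [hrec k]
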